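/- Consider a Max-3-DNF instance with n boolean variables and m conjunctive clauses, each a conjunction of three literals. Construct the graph G that is the disjoint union of n 4-cycles (u_i, u_i^t, ū_i, u_i^f), and for each clause C_j define a weight function w^j on edges by: w^j({u_i, u_i^t}) = 1 if ¬x_i ∈ C_j, w^j({u_i, u_i^f}) = 1 if x_i ∈ C_j, and all other edge weights 0. For a truth assignment σ, let M_σ be the corresponding perfect matching (containing {u_i,u_i^t} and {ū_i,u_i^f} iff σ(x_i) = true). Then for each clause C_j, max_{e ∈ M_σ} w^j(e) = 0 if σ satisfies C_j and = 1 otherwise; consequently the number of clauses satisfied by σ equals m − Σ_{j=1}^m max_{e ∈ M_σ} w^j(e). -/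
import Mathlib


/-- Max-3-DNF to multi-instance min-max perfect matching reduction.
Clauses are `C : Fin m → Fin 3 → Fin n × Bool` (a literal `(i, true)` means `x_i`, and
`(i, false)` means `¬x_i`); `σ` satisfies clause `j` iff all its literals are true.
Edges of the union of 4-cycles are encoded as `(i, a) : Fin n × Fin 4`, where `a = 0` is
`{u_i, u_i^t}`, `a = 1` is `{u_i^t, ū_i}`, `a = 2` is `{ū_i, u_i^f}`, `a = 3` is
`{u_i^f, u_i}`; the matching `M_σ` consists of edges `0, 2` of cycle `i` when `σ i = true`
and edges `1, 3` otherwise. Weights: `w^j(i,0) = 1` iff `¬x_i ∈ C_j`, `w^j(i,3) = 1` iff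
`x_i ∈ C_j`, all other weights `0`. Then `max_{e ∈ M_σ} w^j(e)` is `0` if `σ` satisfies
`C_j` and `1` otherwise, and the number of satisfied clauses equals
`m − Σ_j max_{e ∈ M_σ} w^j(e)`. -/
theorem stmt11 (n m : ℕ) (C : Fin m → Fin 3 → Fin n × Bool) (σ : Fin n → Bool)
    (Msig : Finset (Fin n × Fin 4))
    (hM : Msig = Finset.univ.filter
      (fun e => if σ e.1 then e.2 = 0 ∨ e.2 = 2 else e.2 = 1 ∨ e.2 = 3))
    (w : Fin m → Fin n × Fin 4 → ℕ)
    (hw : ∀ j i a, w j (i, a) =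
      if a = 0 ∧ (∃ k, C j k = (i, false)) then 1
      else if a = 3 ∧ (∃ k, C j k = (i, true)) then 1 else 0) :
    (∀ j : Fin m, Msig.sup (w j) =
      if ∀ k, σ (C j k).1 = (C j k).2 then 0 else 1) ∧
    (Finset.univ.filter (fun j : Fin m => ∀ k, σ (C j k).1 = (C j k).2)).card
      = m - ∑ j : Fin m, Msig.sup (w j) := by
  have hsup : ∀ j : Fin m, Msig.sup (w j) =
      if ∀ k, σ (C j k).1 = (C j k).2 then 0 else 1 := by
    intro j
    split
    · next hsat =>
      apply Nat.le_zero.mp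
      apply Finset.sup_le
      rintro ⟨i, a⟩ he
      rw [hM, Finset.mem_filter] at he
      rw [hw]
      split
      · next h =>
        obtain ⟨ha, k, hk⟩ := h
        have hs := hsat k
        rw [hk] at hs
        simp only at hs
        rw [hs, if_neg (by simp)] at he
        subst ha
        simp at he
      split
      · next h =>
        obtain ⟨ha, k, hk⟩ := h
        have hs := hsat k
        rw [hk] at hs
        simp only at hs
        rw [hs, if_pos rfl] at he
        subst ha
        simp at he
      · rfl
    · next hns =>
      push_neg at hns
      obtain ⟨k, hk⟩ := hns
      apply le_antisymm
      · apply Finset.sup_le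
        rintro ⟨i, a⟩ _
        rw [hw]
        split
        · exact le_refl 1
        split
        · exact le_refl 1
        · exact Nat.zero_le 1
      · cases hb : (C j k).2 with
        | true =>
          have hσ : σ (C j k).1 = false := by
            rw [hb] at hk
            cases h : σ (C j k).1
            · rfl
            · exact absurd h hk
          have hmem : ((C j k).1, (3 : Fin 4)) ∈ Msig := by
            rw [hM, Finset.mem_filter]
            refine ⟨Finset.mem_univ _, ?_⟩
            simp [hσ]
          have hone : w j ((C j k).1, (3 : Fin 4)) = 1 := by
            rw [hw]
            rw [if_neg (by simp), if_pos ⟨rfl, k, by rw [← hb]⟩]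
          exact hone ▸ Finset.le_sup hmem
        | false =>
          have hσ : σ (C j k).1 = true := by
            rw [hb] at hk
            cases h : σ (C j k).1
            · exact absurd h hk
            · rfl
          have hmem : ((C j k).1, (0 : Fin 4)) ∈ Msig := by
            rw [hM, Finset.mem_filter]
            refine ⟨Finset.mem_univ _, ?_⟩
            simp [hσ]
          have hone : w j ((C j k).1, (0 : Fin 4)) = 1 := by
            rw [hw]
            rw [if_pos ⟨rfl, k, by rw [← hb]⟩]
          exact hone ▸ Finset.le_sup hmem
  refine ⟨hsup, ?_⟩
  have hsum : (Finset.univ.filter (fun j : Fin m => ∀ k, σ (C j k).1 = (C j k).2)).card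
      + ∑ j : Fin m, Msig.sup (w j) = m := by
    rw [Finset.card_filter, ← Finset.sum_add_distrib]
    have : ∀ j : Fin m, (if ∀ k, σ (C j k).1 = (C j k).2 then 1 else 0)
        + Msig.sup (w j) = 1 := by
      intro j
      rw [hsup j]
      split <;> rfl
    rw [Finset.sum_congr rfl (fun j _ => this j)]
    simp
  omega
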